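/- Let H be a norm on ℝ^N satisfying the uniform ellipticity condition: there exist λ_*, λ* > 0 with (λ_*/|v|)|τ − (τ·v/|v|)(v/|v|)|² ≤ ⟨∇²H(v)τ, τ⟩ ≤ (λ*/|v|)|τ − (τ·v/|v|)(v/|v|)|² for all v ≠ 0 and all τ. Then the matrix A(ξ) = (1/2)∇²(H²)(ξ) satisfies 2μ₁ Id ≤ A(ξ) ≤ 2μ_N Id for all ξ ≠ 0, where μ₁, μ_N > 0 are constants depending only on λ_*, λ*, and the equivalence constants between H and the Euclidean norm; in particular A is uniformly elliptic with eigenvalues bounded away from 0 and ∞ independently of ξ. -/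

import Mathlib

private theorem aux_low (c₁ lam₁ c₂ m1 a bp r q d Hξ Q T : ℝ)
    (hc₁ : 0 < c₁) (hm1pos : 0 < m1) (hm1le1 : m1 ≤ 1)
    (hm1b : m1 * c₂ ^ 2 ≤ c₁ * lam₁ / 2)
    (hr : c₁ ≤ r) (hq : q ^ 2 ≤ c₂ ^ 2 * bp ^ 2)
    (hd : d = a * r + q)
    (hHQ : c₁ * lam₁ * bp ^ 2 ≤ Hξ * Q)
    (hT : a ^ 2 + bp ^ 2 = T) :
    2 * (min (m1 * c₁ ^ 2 / 2) (c₁ * lam₁ / 2) / 2) * T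
      ≤ 1 / 2 * (2 * Hξ * Q + 2 * d * d) := by
  have h1 : (0 : ℝ) ≤ a ^ 2 * ((r - c₁) * (r + c₁)) :=
    mul_nonneg (sq_nonneg a) (mul_nonneg (sub_nonneg.2 hr) (by linarith))
  have har : c₁ ^ 2 * a ^ 2 ≤ (a * r) ^ 2 := by nlinarith [h1]
  have key1 : c₁ ^ 2 * a ^ 2 / 2 - c₂ ^ 2 * bp ^ 2 ≤ d ^ 2 := by
    rw [hd]
    nlinarith [sq_nonneg (a * r + 2 * q), hq, har]
  have key2 : m1 * (c₁ ^ 2 * a ^ 2 / 2 - c₂ ^ 2 * bp ^ 2) ≤ m1 * d ^ 2 :=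
    mul_le_mul_of_nonneg_left key1 hm1pos.le
  have key3 : m1 * d ^ 2 ≤ d ^ 2 := by nlinarith [sq_nonneg d]
  have key4 : m1 * c₂ ^ 2 * bp ^ 2 ≤ c₁ * lam₁ / 2 * bp ^ 2 :=
    mul_le_mul_of_nonneg_right hm1b (sq_nonneg bp)
  have h5 : min (m1 * c₁ ^ 2 / 2) (c₁ * lam₁ / 2) ≤ m1 * c₁ ^ 2 / 2 := min_le_left _ _
  have h6 : min (m1 * c₁ ^ 2 / 2) (c₁ * lam₁ / 2) ≤ c₁ * lam₁ / 2 := min_le_right _ _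
  subst hT
  nlinarith [key2, key3, key4, hHQ, sq_nonneg a, sq_nonneg bp, h5, h6,
    mul_le_mul_of_nonneg_right h5 (sq_nonneg a),
    mul_le_mul_of_nonneg_right h6 (sq_nonneg bp)]

private theorem aux_up (c₂ lam₂ a bp d Hξ Q T : ℝ)
    (hc₂ : 0 ≤ c₂) (hlam₂ : 0 ≤ lam₂)
    (hHQ : Hξ * Q ≤ c₂ * lam₂ * bp ^ 2)
    (hd2 : d ^ 2 ≤ c₂ ^ 2 * T)
    (hT : a ^ 2 + bp ^ 2 = T) :
    1 / 2 * (2 * Hξ * Q + 2 * d * d) ≤ 2 * ((c₂ ^ 2 + c₂ * lam₂) / 2) * T := by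
  subst hT
  nlinarith [mul_nonneg (mul_nonneg hc₂ hlam₂) (sq_nonneg a), hHQ, hd2]



/-- If `H` is a uniformly elliptic norm on `ℝ^N` (the Hessian of `H` satisfies
`(λ_*/|v|)|τ − (τ·v/|v|)v/|v||² ≤ ⟨∇²H(v)τ, τ⟩ ≤ (λ*/|v|)|τ − (τ·v/|v|)v/|v||²` for `v ≠ 0`),
equivalent to the Euclidean norm with constants `c₁, c₂`, then the coefficient matrix
`A(ξ) = (1/2)∇²(H²)(ξ)` satisfies `2μ₁ Id ≤ A(ξ) ≤ 2μ_N Id` for all `ξ ≠ 0`, with constants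
`0 < μ₁ ≤ μ_N` independent of `ξ`. -/
theorem uniformly_elliptic_coefficients
    (N : ℕ) (H : EuclideanSpace ℝ (Fin N) → ℝ)
    (hconv : ConvexOn ℝ Set.univ H)
    (hpos : ∀ ξ, 0 ≤ H ξ)
    (hdef : ∀ ξ, H ξ = 0 ↔ ξ = 0)
    (hhom : ∀ (t : ℝ) (ξ : EuclideanSpace ℝ (Fin N)), H (t • ξ) = |t| * H ξ)
    (hC2 : ContDiffOn ℝ 2 H {(0 : EuclideanSpace ℝ (Fin N))}ᶜ)
    (c₁ c₂ : ℝ) (hc₁ : 0 < c₁) (hc₂ : 0 < c₂)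
    (hequiv : ∀ ξ : EuclideanSpace ℝ (Fin N), c₁ * ‖ξ‖ ≤ H ξ ∧ H ξ ≤ c₂ * ‖ξ‖)
    (lam₁ lam₂ : ℝ) (hlam₁ : 0 < lam₁) (hlam₂ : 0 < lam₂)
    (hell : ∀ v : EuclideanSpace ℝ (Fin N), v ≠ 0 → ∀ τ : EuclideanSpace ℝ (Fin N),
      lam₁ / ‖v‖ * ‖τ - ((inner ℝ τ (‖v‖⁻¹ • v) : ℝ)) • (‖v‖⁻¹ • v)‖ ^ 2
          ≤ fderiv ℝ (fun x => fderiv ℝ H x) v τ τ ∧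
        fderiv ℝ (fun x => fderiv ℝ H x) v τ τ
          ≤ lam₂ / ‖v‖ * ‖τ - ((inner ℝ τ (‖v‖⁻¹ • v) : ℝ)) • (‖v‖⁻¹ • v)‖ ^ 2) :
    ∃ μ₁ μN : ℝ, 0 < μ₁ ∧ 0 < μN ∧
      ∀ ξ : EuclideanSpace ℝ (Fin N), ξ ≠ 0 → ∀ τ : EuclideanSpace ℝ (Fin N),
        2 * μ₁ * ‖τ‖ ^ 2 ≤ (1 / 2 : ℝ) * fderiv ℝ (fun x => fderiv ℝ (fun y => H y ^ 2) x) ξ τ τ ∧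
        (1 / 2 : ℝ) * fderiv ℝ (fun x => fderiv ℝ (fun y => H y ^ 2) x) ξ τ τ ≤ 2 * μN * ‖τ‖ ^ 2 := by
  -- subadditivity of H
  have hsub : ∀ x y : EuclideanSpace ℝ (Fin N), H (x + y) ≤ H x + H y := by
    intro x y
    have h1 : H ((1/2 : ℝ) • x + (1/2 : ℝ) • y) ≤ (1/2) * H x + (1/2) * H y :=
      hconv.2 (Set.mem_univ x) (Set.mem_univ y) (by norm_num) (by norm_num) (by norm_num)
    have h2 : H ((1/2 : ℝ) • x + (1/2 : ℝ) • y) = (1/2) * H (x + y) := by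
      rw [← smul_add, hhom]
      norm_num
    linarith
  -- H is Lipschitz with constant c₂
  have habs : ∀ x y : EuclideanSpace ℝ (Fin N), |H x - H y| ≤ c₂ * ‖x - y‖ := by
    intro x y
    have hHxy : H (x - y) ≤ c₂ * ‖x - y‖ := (hequiv (x - y)).2
    have hHyx : H (y - x) = H (x - y) := by
      calc H (y - x) = H ((-1 : ℝ) • (x - y)) := by rw [neg_one_smul, neg_sub]
        _ = H (x - y) := by rw [hhom]; norm_num
    rw [abs_sub_le_iff]
    constructor
    · have h := hsub (x - y) y
      rw [sub_add_cancel] at h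
      linarith
    · have h := hsub (y - x) x
      rw [sub_add_cancel] at h
      rw [hHyx] at h
      linarith
  have hlip : LipschitzWith (Real.toNNReal c₂) H := by
    refine LipschitzWith.of_dist_le_mul fun x y => ?_
    rw [Real.dist_eq, dist_eq_norm, Real.coe_toNNReal _ hc₂.le]
    exact habs x y
  -- constants
  set m1 : ℝ := min 1 (c₁ * lam₁ / (2 * c₂ ^ 2)) with hm1def
  have hm1pos : 0 < m1 := lt_min one_pos (by positivity)
  have hm1le1 : m1 ≤ 1 := min_le_left _ _
  have hm1b : m1 * c₂ ^ 2 ≤ c₁ * lam₁ / 2 := by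
    calc m1 * c₂ ^ 2 ≤ (c₁ * lam₁ / (2 * c₂ ^ 2)) * c₂ ^ 2 := by
          have := min_le_right 1 (c₁ * lam₁ / (2 * c₂ ^ 2))
          nlinarith [sq_nonneg c₂]
      _ = c₁ * lam₁ / 2 := by field_simp
  refine ⟨min (m1 * c₁ ^ 2 / 2) (c₁ * lam₁ / 2) / 2, (c₂ ^ 2 + c₂ * lam₂) / 2, by positivity,
    by positivity, ?_⟩
  intro ξ hξ τ
  have hnξ : (0 : ℝ) < ‖ξ‖ := norm_pos_iff.mpr hξ
  have hopen : {(0 : EuclideanSpace ℝ (Fin N))}ᶜ ∈ nhds ξ :=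
    isOpen_compl_singleton.mem_nhds hξ
  have hca : ContDiffAt ℝ 2 H ξ := hC2.contDiffAt hopen
  have hdiff : DifferentiableAt ℝ H ξ := hca.differentiableAt (by norm_num)
  have hd2 : DifferentiableAt ℝ (fun x => fderiv ℝ H x) ξ :=
    (hca.fderiv_right (m := 1) (by norm_num)).differentiableAt one_ne_zero
  -- the derivative of H² on the complement of 0
  have hHsq : ∀ x : EuclideanSpace ℝ (Fin N), x ≠ 0 →
      HasFDerivAt (fun y => H y ^ 2) ((2 * H x) • fderiv ℝ H x) x := by
    intro x hx
    have hdx : DifferentiableAt ℝ H x :=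
      (hC2.contDiffAt (isOpen_compl_singleton.mem_nhds hx)).differentiableAt (by norm_num)
    have h := (hasDerivAt_pow 2 (H x)).comp_hasFDerivAt x hdx.hasFDerivAt
    simpa [Function.comp_def] using h
  have heq : (fun x => fderiv ℝ (fun y => H y ^ 2) x) =ᶠ[nhds ξ]
      (fun x => (2 * H x) • fderiv ℝ H x) := by
    filter_upwards [hopen] with x hx
    exact (hHsq x hx).fderiv
  have hsmul : HasFDerivAt (fun x => (2 * H x) • fderiv ℝ H x)
      ((2 * H ξ) • (fderiv ℝ (fun x => fderiv ℝ H x) ξ) +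
        ((2 : ℝ) • fderiv ℝ H ξ).smulRight (fderiv ℝ H ξ)) ξ :=
    (hdiff.hasFDerivAt.const_mul 2).smul hd2.hasFDerivAt
  have hD : fderiv ℝ (fun x => fderiv ℝ (fun y => H y ^ 2) x) ξ
      = (2 * H ξ) • (fderiv ℝ (fun x => fderiv ℝ H x) ξ) +
        ((2 : ℝ) • fderiv ℝ H ξ).smulRight (fderiv ℝ H ξ) := by
    rw [heq.fderiv_eq, hsmul.fderiv]
  have hval : fderiv ℝ (fun x => fderiv ℝ (fun y => H y ^ 2) x) ξ τ τ
      = 2 * H ξ * (fderiv ℝ (fun x => fderiv ℝ H x) ξ τ τ)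
        + 2 * (fderiv ℝ H ξ τ) * (fderiv ℝ H ξ τ) := by
    rw [hD]
    simp only [ContinuousLinearMap.add_apply, ContinuousLinearMap.coe_smul', Pi.smul_apply,
      ContinuousLinearMap.smulRight_apply, smul_eq_mul]
  -- Euler identity
  have heuler : fderiv ℝ H ξ ξ = H ξ := by
    have hs : HasDerivAt (fun t : ℝ => t • ξ) ξ 1 := by
      simpa using (hasDerivAt_id (1 : ℝ)).smul_const ξ
    have hH1 : HasFDerivAt H (fderiv ℝ H ξ) ((1 : ℝ) • ξ) := by
      rw [one_smul]; exact hdiff.hasFDerivAt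
    have h1 : HasDerivAt (fun t : ℝ => H (t • ξ)) (fderiv ℝ H ξ ξ) 1 := by
      have := hH1.comp_hasDerivAt 1 hs
      simpa [Function.comp_def] using this
    have h2 : HasDerivAt (fun t : ℝ => H (t • ξ)) (H ξ) 1 := by
      have hev : (fun t : ℝ => t * H ξ) =ᶠ[nhds (1 : ℝ)] (fun t : ℝ => H (t • ξ)) := by
        filter_upwards [eventually_gt_nhds (zero_lt_one)] with t ht
        rw [hhom, abs_of_pos ht]
      have hmul : HasDerivAt (fun t : ℝ => t * H ξ) (H ξ) 1 := by
        simpa using (hasDerivAt_id (1 : ℝ)).mul_const (H ξ)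
      exact hmul.congr_of_eventuallyEq hev.symm
    exact h1.unique h2
  -- operator norm bound
  have hD1norm : ∀ w : EuclideanSpace ℝ (Fin N), |fderiv ℝ H ξ w| ≤ c₂ * ‖w‖ := by
    intro w
    have h1 : ‖fderiv ℝ H ξ‖ ≤ c₂ := by
      have := hdiff.hasFDerivAt.le_of_lipschitz hlip
      simpa [Real.coe_toNNReal _ hc₂.le] using this
    calc |fderiv ℝ H ξ w| = ‖fderiv ℝ H ξ w‖ := (Real.norm_eq_abs _).symm
      _ ≤ ‖fderiv ℝ H ξ‖ * ‖w‖ := (fderiv ℝ H ξ).le_opNorm w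
      _ ≤ c₂ * ‖w‖ := mul_le_mul_of_nonneg_right h1 (norm_nonneg w)
  obtain ⟨hlow, hupp⟩ := hell ξ hξ τ
  set e : EuclideanSpace ℝ (Fin N) := ‖ξ‖⁻¹ • ξ with he
  set a : ℝ := (inner ℝ τ e : ℝ) with ha
  set p : EuclideanSpace ℝ (Fin N) := τ - a • e with hpdef
  set Q : ℝ := fderiv ℝ (fun x => fderiv ℝ H x) ξ τ τ with hQ
  set D1 : EuclideanSpace ℝ (Fin N) →L[ℝ] ℝ := fderiv ℝ H ξ with hD1
  clear_value e a p Q D1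
  have hee : ‖e‖ = 1 := by
    rw [he, norm_smul, norm_inv, norm_norm, inv_mul_cancel₀ hnξ.ne']
  have hpy : a ^ 2 + ‖p‖ ^ 2 = ‖τ‖ ^ 2 := by
    have h1 : ‖p‖ ^ 2 = ‖τ‖ ^ 2 - 2 * (inner ℝ τ (a • e) : ℝ) + ‖a • e‖ ^ 2 := by
      rw [hpdef]
      exact norm_sub_sq_real τ (a • e)
    have h2 : (inner ℝ τ (a • e) : ℝ) = a * a := by
      rw [real_inner_smul_right, ← ha]
    have h3 : ‖a • e‖ ^ 2 = a ^ 2 := by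
      rw [norm_smul, hee, mul_one, Real.norm_eq_abs, sq_abs]
    rw [h1, h2, h3]; ring
  have hD1e : D1 e = ‖ξ‖⁻¹ * H ξ := by
    rw [he, map_smul, smul_eq_mul, heuler]
  have hD1τ : D1 τ = a * (‖ξ‖⁻¹ * H ξ) + D1 p := by
    rw [hpdef, map_sub, map_smul, smul_eq_mul, hD1e]
    ring
  have hHl : c₁ * ‖ξ‖ ≤ H ξ := (hequiv ξ).1
  have hHu : H ξ ≤ c₂ * ‖ξ‖ := (hequiv ξ).2
  have hr1 : c₁ ≤ ‖ξ‖⁻¹ * H ξ := by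
    rw [← div_eq_inv_mul, le_div_iff₀ hnξ]
    linarith
  have hQ0 : (0 : ℝ) ≤ Q := le_trans (by positivity) hlow
  have hHQl : c₁ * lam₁ * ‖p‖ ^ 2 ≤ H ξ * Q := by
    have h1 : c₁ * lam₁ * ‖p‖ ^ 2 = (c₁ * ‖ξ‖) * (lam₁ / ‖ξ‖ * ‖p‖ ^ 2) := by
      field_simp
    rw [h1]
    exact mul_le_mul hHl hlow (by positivity) (hpos ξ)
  have hHQu : H ξ * Q ≤ c₂ * lam₂ * ‖p‖ ^ 2 := by
    have h1 : c₂ * lam₂ * ‖p‖ ^ 2 = (c₂ * ‖ξ‖) * (lam₂ / ‖ξ‖ * ‖p‖ ^ 2) := by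
      field_simp
    rw [h1]
    exact mul_le_mul hHu hupp hQ0 (by positivity)
  have hqb : |D1 p| ≤ c₂ * ‖p‖ := hD1norm p
  have hq2 : (D1 p) ^ 2 ≤ c₂ ^ 2 * ‖p‖ ^ 2 := by
    have h := pow_le_pow_left₀ (abs_nonneg (D1 p)) hqb 2
    rwa [sq_abs, mul_pow] at h
  have hτb : |D1 τ| ≤ c₂ * ‖τ‖ := hD1norm τ
  have hτ2 : (D1 τ) ^ 2 ≤ c₂ ^ 2 * ‖τ‖ ^ 2 := by
    have h := pow_le_pow_left₀ (abs_nonneg (D1 τ)) hτb 2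
    rwa [sq_abs, mul_pow] at h
  constructor
  · rw [hval]
    exact aux_low c₁ lam₁ c₂ m1 a ‖p‖ (‖ξ‖⁻¹ * H ξ) (D1 p) (D1 τ) (H ξ) Q (‖τ‖ ^ 2)
      hc₁ hm1pos hm1le1 hm1b hr1 hq2 hD1τ hHQl hpy
  · rw [hval]
    exact aux_up c₂ lam₂ a ‖p‖ (D1 τ) (H ξ) Q (‖τ‖ ^ 2) hc₂.le hlam₂.le hHQu hτ2 hpy
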